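/- Let α ∈ (0,1) and define P_k by P_0 = 1-α, P_k(x) = (2k-1)P_{k-1}(x) - αx^{2k}. If ℓ > 0 satisfies 0 ≤ P_k(ℓ) ≤ (1-α)ℓ^{2k} for all k ≥ 0, then ℓ·g(ℓ) = (1-α)/α where g(ℓ) = e^{ℓ²/2}∫_0^ℓ e^{-y²/2} dy; in particular such ℓ is unique. -/

import Mathlib

open Real intervalIntegral Filter

noncomputable def df : ℕ → ℝ
  | 0 => 1
  | (k+1) => (2*k+1) * df k

lemma df_pos : ∀ k, 0 < df k
  | 0 => one_pos
  | (k+1) => by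
      have := df_pos k
      have h : (0:ℝ) < 2*k+1 := by positivity
      simpa [df] using mul_pos h this

lemma df_ge : ∀ k, (k.factorial : ℝ) ≤ df k
  | 0 => by simp [df]
  | (k+1) => by
      have h := df_ge k
      have h2 : ((k:ℝ)+1) ≤ 2*k+1 := by linarith [Nat.cast_nonneg (α := ℝ) k]
      calc ((k+1).factorial : ℝ) = ((k:ℝ)+1) * k.factorial := by
            push_cast [Nat.factorial_succ]; ring
      _ ≤ (2*k+1) * df k := by
            apply mul_le_mul h2 h (by positivity) (by positivity)
      _ = df (k+1) := rfl

lemma tendsto_pow_div_df (x : ℝ) : Tendsto (fun k => x^(2*k) / df k) atTop (nhds 0) := by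
  apply squeeze_zero' (g := fun k => (x^2)^k / (Nat.factorial k : ℝ))
  · filter_upwards with k
    rw [pow_mul]
    exact div_nonneg (by positivity) (df_pos k).le
  · filter_upwards with k
    rw [pow_mul]
    exact div_le_div_of_nonneg_left (by positivity) (by positivity) (df_ge k)
  · simpa using FloorSemiring.tendsto_pow_div_factorial_atTop (x^2)

noncomputable def Tm (ℓ : ℝ) : ℕ → ℝ
  | 0 => 0
  | (k+1) => Tm ℓ k + ℓ^(2*(k+1)) / df (k+1)

noncomputable def Ii (ℓ : ℝ) (k : ℕ) : ℝ := ∫ y in (0:ℝ)..ℓ, y^(2*k) * Real.exp (-y^2/2)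

lemma cont_integrand (k : ℕ) : Continuous fun y : ℝ => y^(2*k) * Real.exp (-y^2/2) := by
  fun_prop

lemma hv_deriv (y : ℝ) :
    HasDerivAt (fun y : ℝ => -Real.exp (-y^2/2)) (y * Real.exp (-y^2/2)) y := by
  have h1 : HasDerivAt (fun y : ℝ => -y^2/2) (-y) y := by
    have := ((hasDerivAt_pow 2 y).neg).div_const 2
    exact this.congr_deriv (by push_cast; ring)
  have h2 := h1.exp.neg
  exact h2.congr_deriv (by ring)

lemma Ii_succ (ℓ : ℝ) (k : ℕ) :
    Ii ℓ (k+1) = (2*(k:ℝ)+1) * Ii ℓ k - ℓ^(2*k+1) * Real.exp (-ℓ^2/2) := by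
  have hu : ∀ y ∈ Set.uIcc (0:ℝ) ℓ, HasDerivAt (fun y : ℝ => y^(2*k+1)) ((2*(k:ℝ)+1) * y^(2*k)) y := by
    intro y _
    have h := hasDerivAt_pow (2*k+1) y
    exact h.congr_deriv (by push_cast; ring_nf)
  have hv : ∀ y ∈ Set.uIcc (0:ℝ) ℓ, HasDerivAt (fun y : ℝ => -Real.exp (-y^2/2))
      (y * Real.exp (-y^2/2)) y := fun y _ => hv_deriv y
  have hu' : IntervalIntegrable (fun y : ℝ => (2*(k:ℝ)+1) * y^(2*k)) MeasureTheory.volume 0 ℓ :=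
    (Continuous.intervalIntegrable (by fun_prop) _ _)
  have hv' : IntervalIntegrable (fun y : ℝ => y * Real.exp (-y^2/2)) MeasureTheory.volume 0 ℓ :=
    (Continuous.intervalIntegrable (by fun_prop) _ _)
  have key := intervalIntegral.integral_mul_deriv_eq_deriv_mul hu hv hu' hv'
  have e1 : (∫ y in (0:ℝ)..ℓ, y^(2*k+1) * (y * Real.exp (-y^2/2))) = Ii ℓ (k+1) := by
    rw [Ii]
    apply intervalIntegral.integral_congr
    intro y _
    ring_nf
  have e2 : (∫ y in (0:ℝ)..ℓ, ((2*(k:ℝ)+1) * y^(2*k)) * (-Real.exp (-y^2/2)))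
      = -((2*(k:ℝ)+1) * Ii ℓ k) := by
    have : (fun y : ℝ => ((2*(k:ℝ)+1) * y^(2*k)) * (-Real.exp (-y^2/2)))
        = fun y : ℝ => -((2*(k:ℝ)+1) * (y^(2*k) * Real.exp (-y^2/2))) := by
      funext y; ring
    rw [this, intervalIntegral.integral_neg, intervalIntegral.integral_const_mul, Ii]
  rw [e1, e2] at key
  rw [key]
  simp
  ring

lemma ident (ℓ : ℝ) : ∀ k : ℕ,
    ℓ * (Real.exp (ℓ^2/2) * Ii ℓ 0) = Tm ℓ k + ℓ * Real.exp (ℓ^2/2) * Ii ℓ k / df k := by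
  intro k
  induction k with
  | zero => simp [Tm, df]; ring
  | succ n ih =>
    set E := Real.exp (ℓ^2/2) with hE
    set F := Real.exp (-ℓ^2/2) with hF
    have he : E * F = 1 := by
      rw [hE, hF, ← Real.exp_add, show ℓ^2/2 + -ℓ^2/2 = (0:ℝ) by ring, Real.exp_zero]
    have hd := (df_pos n).ne'
    have hd1 : df (n+1) = (2*(n:ℝ)+1) * df n := rfl
    rw [ih, show Tm ℓ (n+1) = Tm ℓ n + ℓ^(2*(n+1)) / df (n+1) from rfl, Ii_succ, hd1]
    have h21 : (2*(n:ℝ)+1) ≠ 0 := by positivity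
    field_simp
    have he' : E * Real.exp (-(ℓ^2/2)) = 1 := by rw [← neg_div]; exact he
    linear_combination (ℓ^2 * ℓ^(n*2)) * he'

lemma Ii_nonneg (ℓ : ℝ) (hℓ : 0 < ℓ) (k : ℕ) : 0 ≤ Ii ℓ k := by
  apply intervalIntegral.integral_nonneg hℓ.le
  intro y hy
  exact mul_nonneg (pow_nonneg hy.1 _) (Real.exp_pos _).le

lemma Ii_le (ℓ : ℝ) (hℓ : 0 < ℓ) (k : ℕ) : Ii ℓ k ≤ ℓ^(2*k+1) := by
  have h1 : Ii ℓ k ≤ ∫ _y in (0:ℝ)..ℓ, ℓ^(2*k) := by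
    apply intervalIntegral.integral_mono_on hℓ.le
      ((cont_integrand k).intervalIntegrable _ _)
      (intervalIntegrable_const)
    intro y hy
    calc y^(2*k) * Real.exp (-y^2/2) ≤ y^(2*k) * 1 := by
          apply mul_le_mul_of_nonneg_left _ (pow_nonneg hy.1 _)
          rw [Real.exp_le_one_iff]
          nlinarith [sq_nonneg y]
    _ = y^(2*k) := mul_one _
    _ ≤ ℓ^(2*k) := pow_le_pow_left₀ hy.1 hy.2 _
  have h2 : (∫ _y in (0:ℝ)..ℓ, ℓ^(2*k)) = ℓ^(2*k+1) := by
    rw [intervalIntegral.integral_const, smul_eq_mul]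
    ring
  linarith

lemma keylemma (α ℓ : ℝ) (hα : α ∈ Set.Ioo (0:ℝ) 1) (hℓ : 0 < ℓ)
    (hQ : ∀ k : ℕ, 0 ≤ (1-α) - α * Tm ℓ k ∧ (1-α) - α * Tm ℓ k ≤ (1-α) * ℓ^(2*k) / df k) :
    ℓ * (Real.exp (ℓ^2/2) * ∫ y in (0:ℝ)..ℓ, Real.exp (-y^2/2)) = (1-α)/α := by
  obtain ⟨hα0, hα1⟩ := hα
  have hI0 : (∫ y in (0:ℝ)..ℓ, Real.exp (-y^2/2)) = Ii ℓ 0 := by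
    simp [Ii]
  rw [hI0]
  set L := ℓ * (Real.exp (ℓ^2/2) * Ii ℓ 0) with hL
  -- the remainder tends to zero
  have hrem : Tendsto (fun k => ℓ * Real.exp (ℓ^2/2) * Ii ℓ k / df k) atTop (nhds 0) := by
    apply squeeze_zero' (g := fun k => (ℓ^2 * Real.exp (ℓ^2/2)) * (ℓ^(2*k) / df k))
    · filter_upwards with k
      exact div_nonneg (mul_nonneg (by positivity) (Ii_nonneg ℓ hℓ k)) (df_pos k).le
    · filter_upwards with k
      rw [div_le_iff₀ (df_pos k)]
      have h1 : ℓ * Real.exp (ℓ^2/2) * Ii ℓ k ≤ ℓ * Real.exp (ℓ^2/2) * ℓ^(2*k+1) := by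
        apply mul_le_mul_of_nonneg_left (Ii_le ℓ hℓ k) (by positivity)
      have h2 : (ℓ^2 * Real.exp (ℓ^2/2)) * (ℓ^(2*k) / df k) * df k
          = ℓ * Real.exp (ℓ^2/2) * ℓ^(2*k+1) := by
        field_simp [(df_pos k).ne']
        ring
      linarith
    · have := (tendsto_pow_div_df ℓ).const_mul (ℓ^2 * Real.exp (ℓ^2/2))
      simpa using this
  have hT : Tendsto (fun k => Tm ℓ k) atTop (nhds L) := by
    have : (fun k => Tm ℓ k) = fun k => L - ℓ * Real.exp (ℓ^2/2) * Ii ℓ k / df k := by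
      funext k
      have := ident ℓ k
      linarith
    rw [this]
    simpa using (tendsto_const_nhds (x := L)).sub hrem
  have hq : Tendsto (fun k => (1-α) - α * Tm ℓ k) atTop (nhds 0) := by
    apply squeeze_zero' (g := fun k => (1-α) * (ℓ^(2*k) / df k))
    · filter_upwards with k; exact (hQ k).1
    · filter_upwards with k
      have := (hQ k).2
      rw [mul_div_assoc] at this
      exact this
    · simpa using (tendsto_pow_div_df ℓ).const_mul (1-α)
  have hαT : Tendsto (fun k => α * Tm ℓ k) atTop (nhds (1-α)) := by
    have : (fun k => α * Tm ℓ k) = fun k => (1-α) - ((1-α) - α * Tm ℓ k) := by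
      funext k; ring
    rw [this]
    simpa using (tendsto_const_nhds (x := (1:ℝ)-α)).sub hq
  have hαT2 : Tendsto (fun k => α * Tm ℓ k) atTop (nhds (α * L)) := hT.const_mul α
  have := tendsto_nhds_unique hαT2 hαT
  rw [eq_div_iff hα0.ne']
  linarith

lemma Fmono {a b : ℝ} (ha : 0 < a) (hab : a < b) :
    a * (Real.exp (a^2/2) * ∫ y in (0:ℝ)..a, Real.exp (-y^2/2)) <
    b * (Real.exp (b^2/2) * ∫ y in (0:ℝ)..b, Real.exp (-y^2/2)) := by
  have hb : 0 < b := ha.trans hab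
  have hcont : Continuous fun y : ℝ => Real.exp (-y^2/2) := by fun_prop
  have hJa : 0 < ∫ y in (0:ℝ)..a, Real.exp (-y^2/2) := by
    apply intervalIntegral.intervalIntegral_pos_of_pos_on (hcont.intervalIntegrable _ _)
    · intro y _; exact Real.exp_pos _
    · exact ha
  have hJab : (∫ y in (0:ℝ)..a, Real.exp (-y^2/2)) ≤ ∫ y in (0:ℝ)..b, Real.exp (-y^2/2) := by
    have hsplit : (∫ y in (0:ℝ)..a, Real.exp (-y^2/2)) + (∫ y in a..b, Real.exp (-y^2/2))
        = ∫ y in (0:ℝ)..b, Real.exp (-y^2/2) :=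
      intervalIntegral.integral_add_adjacent_intervals
        (hcont.intervalIntegrable _ _) (hcont.intervalIntegrable _ _)
    have : 0 ≤ ∫ y in a..b, Real.exp (-y^2/2) :=
      intervalIntegral.integral_nonneg hab.le (fun y _ => (Real.exp_pos _).le)
    linarith
  have hE : Real.exp (a^2/2) ≤ Real.exp (b^2/2) := by
    apply Real.exp_le_exp.2
    nlinarith
  have h1 : Real.exp (a^2/2) * (∫ y in (0:ℝ)..a, Real.exp (-y^2/2))
      ≤ Real.exp (b^2/2) * ∫ y in (0:ℝ)..b, Real.exp (-y^2/2) :=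
    mul_le_mul hE hJab hJa.le (Real.exp_pos _).le
  have hpos : 0 < Real.exp (a^2/2) * ∫ y in (0:ℝ)..a, Real.exp (-y^2/2) :=
    mul_pos (Real.exp_pos _) hJa
  calc a * (Real.exp (a^2/2) * ∫ y in (0:ℝ)..a, Real.exp (-y^2/2))
      < b * (Real.exp (a^2/2) * ∫ y in (0:ℝ)..a, Real.exp (-y^2/2)) :=
        mul_lt_mul_of_pos_right hab hpos
    _ ≤ b * (Real.exp (b^2/2) * ∫ y in (0:ℝ)..b, Real.exp (-y^2/2)) :=
        mul_le_mul_of_nonneg_left h1 hb.le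

lemma fromP (α : ℝ) (hα : α ∈ Set.Ioo (0:ℝ) 1) (P : ℕ → ℝ → ℝ)
    (hP0 : ∀ x : ℝ, P 0 x = 1 - α)
    (hP : ∀ k : ℕ, 1 ≤ k → ∀ x : ℝ, P k x = (2 * k - 1) * P (k - 1) x - α * x ^ (2 * k))
    (ℓ : ℝ) (hℓ : 0 < ℓ)
    (hineq : ∀ k : ℕ, 0 ≤ P k ℓ ∧ P k ℓ ≤ (1 - α) * ℓ ^ (2 * k)) :
    ℓ * (Real.exp (ℓ ^ 2 / 2) * ∫ y in (0:ℝ)..ℓ, Real.exp (-y ^ 2 / 2)) = (1 - α) / α := by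
  have P_eq : ∀ k : ℕ, P k ℓ = df k * ((1 - α) - α * Tm ℓ k) := by
    intro k
    induction k with
    | zero => simp [df, Tm, hP0]
    | succ n ih =>
      rw [hP (n+1) (Nat.succ_le_succ (Nat.zero_le n))]
      simp only [Nat.add_sub_cancel]
      rw [ih, show Tm ℓ (n+1) = Tm ℓ n + ℓ^(2*(n+1)) / df (n+1) from rfl,
        show df (n+1) = (2*(n:ℝ)+1) * df n from rfl]
      have hd := (df_pos n).ne'
      have h21 : (2*(n:ℝ)+1) ≠ 0 := by positivity
      field_simp
      push_cast
      ring
  apply keylemma α ℓ hα hℓ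
  intro k
  obtain ⟨h1, h2⟩ := hineq k
  rw [P_eq k] at h1 h2
  constructor
  · exact nonneg_of_mul_nonneg_right h1 (df_pos k)
  · rw [le_div_iff₀ (df_pos k), mul_comm]
    exact h2

/-- If `ℓ > 0` satisfies `0 ≤ P_k(ℓ) ≤ (1-α)ℓ^{2k}` for all `k ≥ 0`, where `P_0 = 1-α` and
`P_k(x) = (2k-1)P_{k-1}(x) - α x^{2k}`, then `ℓ·g(ℓ) = (1-α)/α` with
`g(ℓ) = e^{ℓ²/2} ∫_0^ℓ e^{-y²/2} dy`; in particular such `ℓ` is unique. -/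
theorem stmt8 (α : ℝ) (hα : α ∈ Set.Ioo (0:ℝ) 1) (P : ℕ → ℝ → ℝ)
    (hP0 : ∀ x : ℝ, P 0 x = 1 - α)
    (hP : ∀ k : ℕ, 1 ≤ k → ∀ x : ℝ, P k x = (2 * k - 1) * P (k - 1) x - α * x ^ (2 * k))
    (ℓ : ℝ) (hℓ : 0 < ℓ)
    (hineq : ∀ k : ℕ, 0 ≤ P k ℓ ∧ P k ℓ ≤ (1 - α) * ℓ ^ (2 * k)) :
    ℓ * (Real.exp (ℓ ^ 2 / 2) * ∫ y in (0:ℝ)..ℓ, Real.exp (-y ^ 2 / 2)) = (1 - α) / α ∧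
    ∀ ℓ' : ℝ, 0 < ℓ' → (∀ k : ℕ, 0 ≤ P k ℓ' ∧ P k ℓ' ≤ (1 - α) * ℓ' ^ (2 * k)) → ℓ' = ℓ := by
  have hmain := fromP α hα P hP0 hP ℓ hℓ hineq
  refine ⟨hmain, ?_⟩
  intro ℓ' hℓ' hineq'
  have hmain' := fromP α hα P hP0 hP ℓ' hℓ' hineq'
  rcases lt_trichotomy ℓ' ℓ with h | h | h
  · exact absurd (hmain'.trans hmain.symm) (Fmono hℓ' h).ne
  · exact h
  · exact absurd (hmain.trans hmain'.symm) (Fmono hℓ h).ne
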